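/- arXiv:2009.04151 — 6 statements merged into one kernel-verified Lean document; each statement's English description precedes it below -/
import Mathlib

section
/- Suppose A is closed and convex and there exists x₀ ∈ L with R(x₀) ∉ {∅, M}. Then R(x) ≠ M for every x ∈ L. (Proof idea: if R(x) = M for some x and R(y) ≠ ∅, then convexity and closedness of A force R(y) = M, contradicting the hypothesis.) -/
theorem stmt_7 {L : Type*} [AddCommGroup L] [Module ℝ L] [TopologicalSpace L]
    [IsTopologicalAddGroup L] [ContinuousSMul ℝ L]
    (A : Set L) (hAcl : IsClosed A) (hAconv : Convex ℝ A) (M : Submodule ℝ L)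
    (R : L → Set L) (hR : ∀ x, R x = {m : L | m ∈ M ∧ x + m ∈ A})
    (hx₀ : ∃ x₀ : L, R x₀ ≠ ∅ ∧ R x₀ ≠ (M : Set L)) :
    ∀ x : L, R x ≠ (M : Set L) := by
  intro x hRx
  obtain ⟨x₀, hne, hnM⟩ := hx₀
  apply hnM
  have hxA : ∀ m ∈ M, x + m ∈ A := by
    intro m hm
    have : m ∈ ({m : L | m ∈ M ∧ x + m ∈ A} : Set L) := by
      rw [← hR x, hRx]; exact hm
    exact this.2
  obtain ⟨m₀, hm₀⟩ := Set.nonempty_iff_ne_empty.mpr hne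
  rw [hR] at hm₀
  obtain ⟨hm₀M, hm₀A⟩ := hm₀
  rw [hR]
  ext m
  simp only [Set.mem_setOf_eq, SetLike.mem_coe]
  constructor
  · exact fun h => h.1
  · intro hm
    refine ⟨hm, ?_⟩
    have key : ∀ t ∈ Set.Ioo (0:ℝ) 1, (1-t)•x₀ + t•x + m ∈ A := by
      intro t ht
      have hmt : t⁻¹ • (m - (1-t)•m₀) ∈ M :=
        M.smul_mem _ (M.sub_mem hm (M.smul_mem _ hm₀M))
      have h1 : x + t⁻¹ • (m - (1-t)•m₀) ∈ A := hxA _ hmt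
      have h2 := hAconv hm₀A h1 (by linarith [ht.2] : (0:ℝ) ≤ 1 - t)
        (le_of_lt ht.1) (by ring)
      convert h2 using 1
      have ht0 : t ≠ 0 := ne_of_gt ht.1
      rw [smul_add, smul_add, smul_smul, mul_inv_cancel₀ ht0, one_smul]
      module
    have tend : Filter.Tendsto (fun t : ℝ => (1-t)•x₀ + t•x + m)
        (nhdsWithin 0 (Set.Ioi 0)) (nhds (x₀ + m)) := by
      have hc : Continuous (fun t : ℝ => (1-t)•x₀ + t•x + m) := by continuity
      have h := hc.tendsto 0
      simp only [sub_zero, one_smul, zero_smul, add_zero, zero_add] at h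
      exact h.mono_left nhdsWithin_le_nhds
    refine hAcl.mem_of_tendsto tend ?_
    filter_upwards [Ioo_mem_nhdsGT (by norm_num : (0:ℝ) < 1)]
      with t ht using key t ht
end

section
/- For every x ∈ L, R(x) = ⋂_{π ∈ K_M⁺ \ {0}} {m ∈ M : π(m) ≥ ρ_π(x)}, where K_M⁺ is the set of continuous linear functionals on M that are nonnegative on K ∩ M and ρ_π(x) = inf{π(m) : m ∈ M, x + m ∈ A}. -/
open Set

noncomputable def rhoPi {L : Type*} [AddCommGroup L] [Module ℝ L] [TopologicalSpace L]
    (A : Set L) (M : Submodule ℝ L) (π : M →L[ℝ] ℝ) (x : L) : EReal :=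
  sInf ((fun n : M => ((π n : ℝ) : EReal)) '' {n : M | x + (n : L) ∈ A})

section Aux
variable {L : Type*} [AddCommGroup L] [Module ℝ L] [TopologicalSpace L]
    [IsTopologicalAddGroup L] [ContinuousSMul ℝ L] [LocallyConvexSpace ℝ L]
    (K : ConvexCone ℝ L) (M : Submodule ℝ L)

instance aux_lcs : LocallyConvexSpace ℝ ↥M :=
  LocallyConvexSpace.induced (M.subtype)

/-- Separation lemma: if `x + n ∉ A` and the slice is nonempty, there is a separating
nonzero functional, nonnegative on `K ∩ M`. -/
lemma exists_sep (A : Set L) (hAcl : IsClosed A) (hAconv : Convex ℝ A)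
    (hAK : ∀ a ∈ A, ∀ k ∈ K, a + k ∈ A) (x : L) (n : M) (hn : x + (n : L) ∉ A)
    (hSne : ∃ b : M, x + (b : L) ∈ A) :
    ∃ π : M →L[ℝ] ℝ, π ≠ 0 ∧ (∀ k : M, (k : L) ∈ K → 0 ≤ π k) ∧
      ∃ u : ℝ, π n < u ∧ ∀ b : M, x + (b : L) ∈ A → u < π b := by
  set S : Set ↥M := {b : M | x + (b : L) ∈ A} with hS
  have hScl : IsClosed S := by
    have : Continuous fun b : M => x + (b : L) := continuous_const.add continuous_subtype_val
    exact hAcl.preimage this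
  have hSconv : Convex ℝ S := by
    intro b₁ h₁ b₂ h₂ a b ha hb hab
    show x + ((a • b₁ + b • b₂ : M) : L) ∈ A
    have heq : x + ((a • b₁ + b • b₂ : M) : L) = a • (x + (b₁ : L)) + b • (x + (b₂ : L)) := by
      push_cast
      match_scalars <;> linarith
    rw [heq]
    exact hAconv h₁ h₂ ha hb hab
  obtain ⟨π, u, hu, hb⟩ := geometric_hahn_banach_point_closed hSconv hScl hn
  obtain ⟨b₀, hb₀S⟩ := hSne
  have hπne : π ≠ 0 := by
    intro hz
    have h1 := hb b₀ hb₀S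
    rw [hz] at hu h1
    simp at hu h1
    linarith
  refine ⟨π, hπne, ?_, u, hu, fun b hbA => hb b hbA⟩
  intro k hk
  by_contra hneg
  push_neg at hneg
  have hbu : u < π b₀ := hb b₀ hb₀S
  set s : ℝ := (π b₀ - u) / (-π k) with hs
  have hsnn : 0 ≤ s := div_nonneg (by linarith) (by linarith)
  have htpos : (0 : ℝ) < s + 1 := by linarith
  have hmem : (b₀ + (s + 1) • k) ∈ S := by
    have hkK : ((s + 1) • (k : L)) ∈ K := K.smul_mem htpos hk
    have := hAK _ hb₀S _ hkK
    show x + ((b₀ + (s + 1) • k : M) : L) ∈ A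
    push_cast
    rw [← add_assoc]
    exact this
  have hlt := hb _ hmem
  rw [map_add, map_smul] at hlt
  simp only [smul_eq_mul] at hlt
  have hcancel : s * (-π k) = π b₀ - u := div_mul_cancel₀ _ (by linarith)
  have h2 : (s + 1) * π k = -(s * (-π k)) + π k := by ring
  linarith

end Aux

theorem stmt_13 {L : Type*} [AddCommGroup L] [Module ℝ L] [TopologicalSpace L]
    [IsTopologicalAddGroup L] [ContinuousSMul ℝ L] [LocallyConvexSpace ℝ L] [T2Space L]
    (K : ConvexCone ℝ L) (hKcl : IsClosed (K : Set L))
    (hKK : ∀ x : L, ∃ a ∈ K, ∃ b ∈ K, x = a - b)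
    (A : Set L) (hAcl : IsClosed A) (hAconv : Convex ℝ A)
    (hAK : ∀ a ∈ A, ∀ k ∈ K, a + k ∈ A)
    (M : Submodule ℝ L) (hMcl : IsClosed (M : Set L))
    (hMK : ∃ m : L, m ∈ M ∧ m ∈ K ∧ m ≠ 0)
    (R : L → Set L) (hR : ∀ x, R x = {m : L | m ∈ M ∧ x + m ∈ A})
    (hx₀ : ∃ x₀ : L, R x₀ ≠ ∅ ∧ R x₀ ≠ (M : Set L)) :
    ∀ x : L, R x =
      ⋂ (π : M →L[ℝ] ℝ) (_ : π ≠ 0) (_ : ∀ k : M, (k : L) ∈ K → 0 ≤ π k),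
        {m : L | ∃ hm : m ∈ M, rhoPi A M π x ≤ ((π ⟨m, hm⟩ : ℝ) : EReal)} := by
  -- First, get one nonzero nonnegative functional from hx₀
  obtain ⟨x₀, hne, hnall⟩ := hx₀
  have hx₀ex : ∃ m₀ : M, x₀ + (m₀ : L) ∈ A := by
    rw [hR x₀] at hne
    rcases Set.nonempty_iff_ne_empty.2 hne with ⟨m, hm⟩
    exact ⟨⟨m, hm.1⟩, hm.2⟩
  have hx₀not : ∃ n₀ : M, x₀ + (n₀ : L) ∉ A := by
    by_contra h
    push_neg at h
    apply hnall
    rw [hR x₀]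
    ext m
    constructor
    · exact fun hm => hm.1
    · exact fun hm => ⟨hm, h ⟨m, hm⟩⟩
  obtain ⟨n₀, hn₀⟩ := hx₀not
  obtain ⟨π₀, hπ₀ne, hπ₀K, -⟩ := exists_sep K M A hAcl hAconv hAK x₀ n₀ hn₀ hx₀ex
  intro x
  ext m
  simp only [Set.mem_iInter, Set.mem_setOf_eq, hR x]
  constructor
  · rintro ⟨hmM, hmA⟩ π hπne hπK
    refine ⟨hmM, ?_⟩
    apply sInf_le
    exact ⟨⟨m, hmM⟩, hmA, rfl⟩
  · intro h
    obtain ⟨hmM, -⟩ := h π₀ hπ₀ne hπ₀K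
    refine ⟨hmM, ?_⟩
    by_contra hmA
    by_cases hSne : ∃ b : M, x + (b : L) ∈ A
    · obtain ⟨π, hπne, hπK, u, hu, hb⟩ := exists_sep K M A hAcl hAconv hAK x ⟨m, hmM⟩ hmA hSne
      obtain ⟨hmM', hle⟩ := h π hπne hπK
      have h1 : (u : EReal) ≤ rhoPi A M π x := by
        apply le_sInf
        rintro y ⟨b, hbA, rfl⟩
        show (u : EReal) ≤ ((π b : ℝ) : EReal)
        exact_mod_cast (hb b hbA).le
      have h2 : (u : EReal) ≤ ((π ⟨m, hmM'⟩ : ℝ) : EReal) := h1.trans hle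
      have h3 := EReal.coe_le_coe_iff.mp h2
      linarith
    · -- the A-slice is empty: rhoPi = ⊤ for π₀, contradiction
      obtain ⟨hmM', hle⟩ := h π₀ hπ₀ne hπ₀K
      have htop : rhoPi A M π₀ x = ⊤ := by
        rw [rhoPi]
        convert sInf_empty
        · rfl
        rw [Set.image_eq_empty]
        push_neg at hSne
        exact Set.eq_empty_iff_forall_notMem.2 fun b hbA => hSne b hbA
      rw [htop] at hle
      exact (EReal.coe_lt_top _).not_ge hle
end

section
/- The family {u_π : π ∈ K_M⁺ \ {0}}, with u_π(x) = -inf{π(m) : m ∈ M, x + m ∈ A}, is a multi-utility representation of ⪰_R: for all x, y ∈ L, R(x) ⊇ R(y) if and only if u_π(x) ≥ u_π(y) for every nonzero π ∈ K_M⁺. -/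
open Set

/-- Separation of a point from `A`, with the separating functional nonnegative on `K`. -/
lemma sep_lemma {L : Type*} [AddCommGroup L] [Module ℝ L] [TopologicalSpace L]
    [IsTopologicalAddGroup L] [ContinuousSMul ℝ L] [LocallyConvexSpace ℝ L]
    (K : ConvexCone ℝ L)
    (A : Set L) (hAcl : IsClosed A) (hAconv : Convex ℝ A)
    (hAK : ∀ a ∈ A, ∀ k ∈ K, a + k ∈ A)
    (hA : A.Nonempty) {z : L} (hz : z ∉ A) :
    ∃ (f : L →L[ℝ] ℝ) (α : ℝ), f z < α ∧ (∀ a ∈ A, α ≤ f a) ∧ ∀ k ∈ K, 0 ≤ f k := by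
  obtain ⟨f, u, hfz, hfA⟩ := geometric_hahn_banach_point_closed hAconv hAcl hz
  refine ⟨f, u, hfz, fun a ha => (hfA a ha).le, ?_⟩
  intro k hk
  by_contra h
  push_neg at h
  obtain ⟨a, ha⟩ := hA
  have hau : u < f a := hfA a ha
  have hfk : 0 < -f k := by linarith
  set t := (f a - u + 1) / (-f k) with htdef
  have ht : 0 < t := div_pos (by linarith) hfk
  have h2 : u < f (a + t • k) := hfA _ (hAK a ha _ (K.smul_mem ht hk))
  have h3 : f (a + t • k) = f a + t * f k := by simp [map_add, map_smul, smul_eq_mul]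
  have h4 : t * (-f k) = f a - u + 1 := div_mul_cancel₀ _ hfk.ne'
  nlinarith

/-- From a point `x + m ∉ A` (with `m ∈ M`) and some `x + n ∈ A` (`n ∈ M`), produce a nonzero
functional on `M`, nonnegative on `K ∩ M`, strictly separating. -/
lemma sep2 {L : Type*} [AddCommGroup L] [Module ℝ L] [TopologicalSpace L]
    [IsTopologicalAddGroup L] [ContinuousSMul ℝ L] [LocallyConvexSpace ℝ L]
    (K : ConvexCone ℝ L)
    (A : Set L) (hAcl : IsClosed A) (hAconv : Convex ℝ A)
    (hAK : ∀ a ∈ A, ∀ k ∈ K, a + k ∈ A)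
    (M : Submodule ℝ L) (x : L) (m : M)
    (hne : ∃ n : M, x + (n : L) ∈ A) (hm : x + (m : L) ∉ A) :
    ∃ (π : M →L[ℝ] ℝ) (β : ℝ), π ≠ 0 ∧ (∀ k : M, (k : L) ∈ K → 0 ≤ π k) ∧
      (π m : ℝ) < β ∧ ∀ n : M, x + (n : L) ∈ A → β ≤ π n := by
  obtain ⟨n₀, hn₀⟩ := hne
  obtain ⟨f, α, h1, h2, h3⟩ := sep_lemma K A hAcl hAconv hAK ⟨_, hn₀⟩ hm
  refine ⟨f.comp M.subtypeL, α - f x, ?_, ?_, ?_, ?_⟩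
  · intro h0
    have hz : ∀ n : M, f (n : L) = 0 := by
      intro n
      have := congrFun (congrArg (fun g : M →L[ℝ] ℝ => (g : M → ℝ)) h0) n
      simpa using this
    have e1 : f (x + (m : L)) = f x := by simp [map_add, hz m]
    have e2 : f (x + (n₀ : L)) = f x := by simp [map_add, hz n₀]
    have := h2 _ hn₀
    rw [e2] at this
    rw [e1] at h1
    linarith
  · exact fun k hk => h3 _ hk
  · have : f (x + (m : L)) = f x + f (m : L) := map_add f _ _
    simp only [ContinuousLinearMap.comp_apply, Submodule.subtypeL_apply]
    linarith [h1, this.symm.trans_lt h1]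
  · intro n hn
    have := h2 _ hn
    have e : f (x + (n : L)) = f x + f (n : L) := map_add f _ _
    simp only [ContinuousLinearMap.comp_apply, Submodule.subtypeL_apply]
    linarith

theorem stmt_14 {L : Type*} [AddCommGroup L] [Module ℝ L] [TopologicalSpace L]
    [IsTopologicalAddGroup L] [ContinuousSMul ℝ L] [LocallyConvexSpace ℝ L] [T2Space L]
    (K : ConvexCone ℝ L) (hKcl : IsClosed (K : Set L))
    (hKK : ∀ x : L, ∃ a ∈ K, ∃ b ∈ K, x = a - b)
    (A : Set L) (hAcl : IsClosed A) (hAconv : Convex ℝ A)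
    (hAK : ∀ a ∈ A, ∀ k ∈ K, a + k ∈ A)
    (M : Submodule ℝ L) (hMcl : IsClosed (M : Set L))
    (hMK : ∃ m : L, m ∈ M ∧ m ∈ K ∧ m ≠ 0)
    (R : L → Set L) (hR : ∀ x, R x = {m : L | m ∈ M ∧ x + m ∈ A})
    (hx₀ : ∃ x₀ : L, R x₀ ≠ ∅ ∧ R x₀ ≠ (M : Set L)) :
    ∀ x y : L, R y ⊆ R x ↔
      ∀ π : M →L[ℝ] ℝ, π ≠ 0 → (∀ k : M, (k : L) ∈ K → 0 ≤ π k) →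
        -(rhoPi A M π y) ≤ -(rhoPi A M π x) := by
  intro x y
  constructor
  · intro hsub π _ _
    have hset : {n : M | y + (n : L) ∈ A} ⊆ {n : M | x + (n : L) ∈ A} := by
      intro n hn
      have hmem : (n : L) ∈ R y := by rw [hR]; exact ⟨n.2, hn⟩
      have := hsub hmem
      rw [hR] at this
      exact this.2
    exact EReal.neg_le_neg_iff.mpr (sInf_le_sInf (image_mono hset))
  · intro h
    by_contra hsub
    rw [Set.not_subset] at hsub
    obtain ⟨m, hmRy, hmRx⟩ := hsub
    rw [hR] at hmRy hmRx
    obtain ⟨hmM, hymA⟩ := hmRy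
    set m' : M := ⟨m, hmM⟩ with hm'
    by_cases hRx : ∃ n : M, x + (n : L) ∈ A
    · have hxm : x + (m' : L) ∉ A := fun hc => hmRx ⟨hmM, hc⟩
      obtain ⟨π, β, hπ0, hπK, hπm, hπA⟩ := sep2 K A hAcl hAconv hAK M x m' hRx hxm
      have hxy := EReal.neg_le_neg_iff.mp (h π hπ0 hπK)
      have hy_le : rhoPi A M π y ≤ ((π m' : ℝ) : EReal) := sInf_le ⟨m', hymA, rfl⟩
      have hx_ge : ((β : ℝ) : EReal) ≤ rhoPi A M π x := by
        apply le_sInf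
        rintro b ⟨n, hn, rfl⟩
        show ((β:ℝ):EReal) ≤ ((π n : ℝ) : EReal)
        exact_mod_cast hπA n hn
      have hlt : ((π m' : ℝ) : EReal) < ((β : ℝ) : EReal) := by exact_mod_cast hπm
      exact absurd ((hxy.trans hy_le).trans_lt (hlt.trans_le hx_ge)) (lt_irrefl _)
    · -- R x is empty: rhoPi x = ⊤, and we only need existence of some nonzero π ∈ K_M⁺
      obtain ⟨x₀, hx₀ne, hx₀neM⟩ := hx₀
      have hne0 : ∃ n : M, x₀ + (n : L) ∈ A := by
        rcases Set.nonempty_iff_ne_empty.mpr hx₀ne with ⟨w, hw⟩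
        rw [hR] at hw
        exact ⟨⟨w, hw.1⟩, hw.2⟩
      have hnot0 : ∃ n : M, x₀ + (n : L) ∉ A := by
        by_contra hc
        push_neg at hc
        apply hx₀neM
        ext w
        rw [hR]
        exact ⟨fun hw => hw.1, fun hw => ⟨hw, hc ⟨w, hw⟩⟩⟩
      obtain ⟨n₁, hn₁⟩ := hnot0
      obtain ⟨π, β, hπ0, hπK, -, -⟩ := sep2 K A hAcl hAconv hAK M x₀ n₁ hne0 hn₁
      have hxy := EReal.neg_le_neg_iff.mp (h π hπ0 hπK)
      have hx_top : rhoPi A M π x = ⊤ := by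
        have : {n : M | x + (n : L) ∈ A} = ∅ := by
          ext n; simp only [Set.mem_setOf_eq, Set.mem_empty_iff_false, iff_false]
          exact fun hn => hRx ⟨n, hn⟩
        simp [rhoPi, this]
      have hy_le : rhoPi A M π y ≤ ((π m' : ℝ) : EReal) := sInf_le ⟨m', hymA, rfl⟩
      rw [hx_top] at hxy
      exact absurd (hxy.trans hy_le) (not_le.mpr (EReal.coe_lt_top _))
end

section
/- If A is a closed convex subset of L, then A = ⋂_{π ∈ K_M⁺ \ {0}} cl(A + ker π), where ker π = {m ∈ M : π(m) = 0}, provided there exists x ∈ L with R(x) ∉ {∅, M}. (Inclusion ⊆ is trivial; the converse follows from the Hahn–Banach external representation of A.) -/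
open Pointwise

theorem stmt_15 {L : Type*} [AddCommGroup L] [Module ℝ L] [TopologicalSpace L]
    [IsTopologicalAddGroup L] [ContinuousSMul ℝ L] [LocallyConvexSpace ℝ L] [T2Space L]
    (K : ConvexCone ℝ L) (hKcl : IsClosed (K : Set L))
    (hKK : ∀ x : L, ∃ a ∈ K, ∃ b ∈ K, x = a - b)
    (A : Set L) (hAcl : IsClosed A) (hAconv : Convex ℝ A)
    (hAK : ∀ a ∈ A, ∀ k ∈ K, a + k ∈ A)
    (M : Submodule ℝ L) (hMcl : IsClosed (M : Set L))
    (hMK : ∃ m : L, m ∈ M ∧ m ∈ K ∧ m ≠ 0)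
    (R : L → Set L) (hR : ∀ x, R x = {m : L | m ∈ M ∧ x + m ∈ A})
    (hx₀ : ∃ x₀ : L, R x₀ ≠ ∅ ∧ R x₀ ≠ (M : Set L)) :
    A = ⋂ (π : M →L[ℝ] ℝ) (_ : π ≠ 0) (_ : ∀ k : M, (k : L) ∈ K → 0 ≤ π k),
          closure (A + {m : L | ∃ hm : m ∈ M, π ⟨m, hm⟩ = 0}) := by
  obtain ⟨x₀, hR0ne, hR0M⟩ := hx₀
  obtain ⟨m₁, hm₁⟩ := Set.nonempty_iff_ne_empty.2 hR0ne
  rw [hR x₀] at hm₁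
  obtain ⟨hm₁M, hm₁A⟩ := hm₁
  have hAne : A.Nonempty := ⟨x₀ + m₁, hm₁A⟩
  have hsub : ¬ (M : Set L) ⊆ R x₀ := fun h =>
    hR0M (subset_antisymm (by rw [hR x₀]; exact fun m hm => hm.1) h)
  obtain ⟨m₂, hm₂M, hm₂⟩ := Set.not_subset.1 hsub
  have hm₂A : x₀ + m₂ ∉ A := fun h => hm₂ (by rw [hR x₀]; exact ⟨hm₂M, h⟩)
  have aux : ∀ (g : L →L[ℝ] ℝ) (v : ℝ), (∀ a ∈ A, v < g a) → ∀ k ∈ K, 0 ≤ g k := by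
    intro g v hg k hk
    by_contra hneg
    push_neg at hneg
    obtain ⟨a, ha⟩ := hAne
    have hgk : g k ≠ 0 := ne_of_lt hneg
    set t : ℝ := (g a - v + 1) / (-(g k)) with ht
    have htpos : 0 < t := div_pos (by linarith [hg a ha]) (by linarith)
    have hmem : a + t • k ∈ A := hAK a ha _ (K.smul_mem htpos hk)
    have h1 := hg _ hmem
    rw [map_add, map_smul, smul_eq_mul] at h1
    have h2 : t * g k = -(g a - v + 1) := by
      rw [ht]; field_simp
    linarith
  apply subset_antisymm
  · intro a ha
    simp only [Set.mem_iInter]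
    intro π hπ hπK
    apply subset_closure
    exact ⟨a, ha, 0, ⟨M.zero_mem, map_zero π⟩, add_zero a⟩
  · intro x hx
    by_contra hxA
    obtain ⟨f, u, hfx, hfA⟩ := geometric_hahn_banach_point_closed hAconv hAcl hxA
    have hfK := aux f u hfA
    have key : ∀ (π : M →L[ℝ] ℝ), π ≠ 0 → (∀ k : M, (k : L) ∈ K → 0 ≤ π k) →
        (∀ m (hm : m ∈ M), π ⟨m, hm⟩ = 0 → f m = 0) → False := by
      intro π hne hK' hker
      have hx' : x ∈ closure (A + {m : L | ∃ hm : m ∈ M, π ⟨m, hm⟩ = 0}) := by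
        simp only [Set.mem_iInter] at hx
        exact hx π hne hK'
      have hcl : closure (A + {m : L | ∃ hm : m ∈ M, π ⟨m, hm⟩ = 0}) ⊆ {y | u ≤ f y} := by
        apply closure_minimal _ (isClosed_le continuous_const f.continuous)
        rintro y ⟨a, ha, m, ⟨hm, hπm⟩, rfl⟩
        have hfm : f m = 0 := hker m hm hπm
        simp only [Set.mem_setOf_eq, map_add, hfm, add_zero]
        exact (hfA a ha).le
      have := hcl hx'
      simp only [Set.mem_setOf_eq] at this
      linarith
    by_cases hfM : ∀ m ∈ M, f m = 0
    · obtain ⟨g, v, hgx, hgA⟩ := geometric_hahn_banach_point_closed hAconv hAcl hm₂A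
      have hgK := aux g v hgA
      set π : M →L[ℝ] ℝ := g.comp M.subtypeL with hπ
      have hval : ∀ m (hm : m ∈ M), π ⟨m, hm⟩ = g m := fun m hm => rfl
      have hne : π ≠ 0 := by
        intro h0
        have h1 : g m₁ = 0 := by rw [← hval m₁ hm₁M, h0]; rfl
        have h2 : g m₂ = 0 := by rw [← hval m₂ hm₂M, h0]; rfl
        have h3 := hgA _ hm₁A
        rw [map_add] at h3 hgx
        linarith
      exact key π hne (fun k hk => hgK k hk) (fun m hm h => hfM m hm)
    · push_neg at hfM
      obtain ⟨m0, hm0M, hm0⟩ := hfM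
      set π : M →L[ℝ] ℝ := f.comp M.subtypeL with hπ
      have hne : π ≠ 0 := by
        intro h0
        exact hm0 (by rw [show f m0 = π ⟨m0, hm0M⟩ from rfl, h0]; rfl)
      exact key π hne (fun k hk => hfK k hk) (fun m hm h => h)
end

section
/- For every π ∈ K_M⁺ \ {0} with ext(π) ∩ barr(A) ≠ ∅, the functional ρ*_π(x) = sup{σ_A(ψ) - ψ(x) : ψ ∈ L', ψ|_M = π} is the lower semicontinuous hull of ρ_π(x) = inf{π(m) : m ∈ M, x + m ∈ A}; i.e., ρ*_π is lower semicontinuous, ρ*_π ≤ ρ_π, and any lower semicontinuous f ≤ ρ_π satisfies f ≤ ρ*_π. -/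
open Filter Topology Set

private lemma forall_linear_lt_zero {u v s : ℝ} (h : ∀ t : ℝ, u + t * v < s) : v = 0 := by
  by_contra hv
  have h2 := h ((s - u) / v)
  rw [div_mul_cancel₀ _ hv] at h2
  linarith

noncomputable def suppFn {L : Type*} [AddCommGroup L] [Module ℝ L] [TopologicalSpace L]
    (S : Set L) (ψ : L →L[ℝ] ℝ) : EReal :=
  sInf ((fun x : L => ((ψ x : ℝ) : EReal)) '' S)

noncomputable def rhoStar {L : Type*} [AddCommGroup L] [Module ℝ L] [TopologicalSpace L]
    (A : Set L) (M : Submodule ℝ L) (π : M →L[ℝ] ℝ) (x : L) : EReal :=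
  sSup ((fun ψ : L →L[ℝ] ℝ => suppFn A ψ - ((ψ x : ℝ) : EReal)) ''
    {ψ : L →L[ℝ] ℝ | ∀ m : M, ψ (m : L) = π m})

theorem stmt_17 {L : Type*} [AddCommGroup L] [Module ℝ L] [TopologicalSpace L]
    [IsTopologicalAddGroup L] [ContinuousSMul ℝ L] [LocallyConvexSpace ℝ L] [T2Space L]
    (K : ConvexCone ℝ L) (hKcl : IsClosed (K : Set L))
    (hKK : ∀ x : L, ∃ a ∈ K, ∃ b ∈ K, x = a - b)
    (A : Set L) (hAcl : IsClosed A) (hAconv : Convex ℝ A)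
    (hAK : ∀ a ∈ A, ∀ k ∈ K, a + k ∈ A)
    (M : Submodule ℝ L) (hMcl : IsClosed (M : Set L))
    (hMK : ∃ m : L, m ∈ M ∧ m ∈ K ∧ m ≠ 0)
    (hx₀ : ∃ x₀ : L, {m : L | m ∈ M ∧ x₀ + m ∈ A} ≠ ∅ ∧
      {m : L | m ∈ M ∧ x₀ + m ∈ A} ≠ (M : Set L))
    (π : M →L[ℝ] ℝ) (hπ0 : π ≠ 0) (hπK : ∀ k : M, (k : L) ∈ K → 0 ≤ π k)
    (hext : ∃ ψ : L →L[ℝ] ℝ, (∀ m : M, ψ (m : L) = π m) ∧ suppFn A ψ ≠ ⊥) :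
    LowerSemicontinuous (rhoStar A M π) ∧
    (∀ x : L, rhoStar A M π x ≤ rhoPi A M π x) ∧
    (∀ f : L → EReal, LowerSemicontinuous f → (∀ x, f x ≤ rhoPi A M π x) →
      ∀ x, f x ≤ rhoStar A M π x) := by
  refine ⟨?_, ?_, ?_⟩
  · -- lower semicontinuity of rhoStar
    intro x y hy
    rw [rhoStar] at hy
    obtain ⟨_, ⟨ψ, hψ, rfl⟩, hb⟩ := lt_sSup_iff.mp hy
    have hb' : y < suppFn A ψ - ((ψ x : ℝ) : EReal) := hb
    clear hb
    rename' hb' => hb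
    have key : ∀ᶠ x' in 𝓝 x, y < suppFn A ψ - ((ψ x' : ℝ) : EReal) := by
      set u := suppFn A ψ with hu
      clear_value u
      induction u using EReal.rec with
      | bot => rw [EReal.bot_sub] at hb; exact absurd hb not_lt_bot
      | top =>
        filter_upwards with x'
        rw [EReal.top_sub_coe]
        exact lt_of_lt_of_le hb le_top
      | coe u =>
        have hcont : Continuous fun x' : L => ((u - ψ x' : ℝ) : EReal) :=
          continuous_coe_real_ereal.comp (continuous_const.sub ψ.continuous)
        have hopen : IsOpen {x' : L | y < ((u - ψ x' : ℝ) : EReal)} :=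
          isOpen_Ioi.preimage hcont
        have hx : x ∈ {x' : L | y < ((u - ψ x' : ℝ) : EReal)} := by
          simp only [Set.mem_setOf_eq, EReal.coe_sub]; exact hb
        filter_upwards [hopen.mem_nhds hx] with x' hx'
        rw [← EReal.coe_sub]; exact hx'
    filter_upwards [key] with x' hx'
    exact lt_of_lt_of_le hx' (le_sSup ⟨ψ, hψ, rfl⟩)
  · -- rhoStar ≤ rhoPi
    intro x
    rw [rhoStar, rhoPi]
    apply sSup_le
    rintro _ ⟨ψ, hψ, rfl⟩
    apply le_sInf
    rintro _ ⟨m, hm, rfl⟩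
    have h1 : suppFn A ψ ≤ ((ψ (x + (m : L)) : ℝ) : EReal) := sInf_le ⟨_, hm, rfl⟩
    have h2 : (ψ (x + (m : L)) : ℝ) = ψ x + π m := by rw [map_add, hψ m]
    calc suppFn A ψ - ((ψ x : ℝ) : EReal)
        ≤ ((ψ x + π m : ℝ) : EReal) - ((ψ x : ℝ) : EReal) := by
          refine EReal.sub_le_sub ?_ le_rfl
          rw [← h2]; exact h1
      _ = ((π m : ℝ) : EReal) := by rw [← EReal.coe_sub]; norm_num
  · -- lsc hull property
    intro f hflsc hfle x
    by_contra hcon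
    push_neg at hcon
    obtain ⟨r, hr1, hr2⟩ := EReal.exists_between_coe_real hcon
    -- a point of A
    obtain ⟨x₀, hne, -⟩ := hx₀
    obtain ⟨m₀, hm₀⟩ := Set.nonempty_iff_ne_empty.mpr hne
    set a₀ := x₀ + m₀ with ha₀
    have hAne : a₀ ∈ A := hm₀.2
    -- epigraph of rhoPi
    set E : Set (L × ℝ) := {p | ∃ a ∈ A, ∃ m : M, p.1 = a - (m : L) ∧ (π m : ℝ) ≤ p.2}
      with hE
    have hEconv : Convex ℝ E := by
      rintro p ⟨a, ha, m, hp1, hm⟩ q ⟨b, hb, n, hq1, hn⟩ θ σ hθ hσ hθσ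
      refine ⟨θ • a + σ • b, hAconv ha hb hθ hσ hθσ, θ • m + σ • n, ?_, ?_⟩
      · show (θ • p + σ • q).1 = _
        simp only [Prod.fst_add, Prod.smul_fst, hp1, hq1, Submodule.coe_add,
          Submodule.coe_smul, smul_sub]
        abel
      · show (π (θ • m + σ • n) : ℝ) ≤ (θ • p + σ • q).2
        simp only [map_add, map_smul, smul_eq_mul, Prod.snd_add, Prod.smul_snd]
        have := mul_le_mul_of_nonneg_left hm hθ
        have := mul_le_mul_of_nonneg_left hn hσ
        linarith
    -- E lies in the closed set S
    have hES : E ⊆ {p : L × ℝ | f p.1 ≤ ((p.2 : ℝ) : EReal)} := by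
      rintro ⟨y, t⟩ ⟨a, ha, m, hy, hm⟩
      have hmem : m ∈ {n : M | y + (n : L) ∈ A} := by
        show y + (m : L) ∈ A
        have hy' : y = a - (m : L) := hy
        rw [hy', sub_add_cancel]; exact ha
      have h1 : rhoPi A M π y ≤ ((π m : ℝ) : EReal) := sInf_le ⟨m, hmem, rfl⟩
      exact le_trans (hfle y) (le_trans h1 (by exact_mod_cast hm))
    have hScl : IsClosed {p : L × ℝ | f p.1 ≤ ((p.2 : ℝ) : EReal)} := by
      rw [← isOpen_compl_iff, isOpen_iff_mem_nhds]
      rintro ⟨y, t⟩ hyt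
      simp only [Set.mem_compl_iff, Set.mem_setOf_eq, not_le] at hyt
      obtain ⟨q, hq1, hq2⟩ := EReal.exists_between_coe_real hyt
      have h1 : {z : L | (q : EReal) < f z} ∈ 𝓝 y := hflsc y q hq2
      have h2 : Iio q ∈ 𝓝 t := Iio_mem_nhds (by exact_mod_cast hq1)
      rw [nhds_prod_eq]
      apply Filter.mem_of_superset (Filter.prod_mem_prod h1 h2)
      rintro ⟨z, u⟩ ⟨hz, hu⟩
      simp only [Set.mem_compl_iff, Set.mem_setOf_eq, not_le]
      exact lt_trans (by exact_mod_cast hu) hz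
    have hxr : ((x, r) : L × ℝ) ∉ closure E := by
      intro h
      have := hScl.closure_subset_iff.mpr hES h
      exact absurd hr2 (not_lt_of_ge this)
    obtain ⟨Φ, s, hΦE, hΦx⟩ :=
      geometric_hahn_banach_closed_point (hEconv.closure) isClosed_closure hxr
    set φ : L →L[ℝ] ℝ := Φ.comp (ContinuousLinearMap.inl ℝ L ℝ) with hφdef
    set c : ℝ := Φ (0, 1) with hcdef
    have hΦ : ∀ (y : L) (t : ℝ), Φ (y, t) = φ y + t * c := by
      intro y t
      have hyt : ((y, t) : L × ℝ) = (y, (0 : ℝ)) + t • ((0 : L), (1 : ℝ)) := by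
        simp [Prod.ext_iff]
      rw [hyt, map_add, map_smul, smul_eq_mul]
      rfl
    have hmemE : ∀ a ∈ A, ∀ m : M, ∀ t : ℝ, (π m : ℝ) ≤ t → φ (a - (m : L)) + t * c < s := by
      intro a ha m t ht
      have hmem : ((a - (m : L), t) : L × ℝ) ∈ E := ⟨a, ha, m, rfl, ht⟩
      have := hΦE _ (subset_closure hmem)
      rwa [hΦ] at this
    have hφA : ∀ a ∈ A, φ a < s := by
      intro a ha
      have := hmemE a ha 0 0 (by simp)
      simpa using this
    have hc0 : c ≤ 0 := by
      by_contra h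
      push_neg at h
      set t : ℝ := max 0 ((s - φ a₀) / c) with ht
      have key := hmemE a₀ hAne 0 t (by simp [ht])
      simp only [ZeroMemClass.coe_zero, sub_zero] at key
      have h1 : (s - φ a₀) / c ≤ t := le_max_right _ _
      nlinarith [mul_le_mul_of_nonneg_right h1 h.le, div_mul_cancel₀ (s - φ a₀) h.ne']
    have hφM : ∀ m : M, φ (m : L) = c * (π m : ℝ) := by
      intro m
      have key : ∀ t : ℝ, φ a₀ + t * ((π m : ℝ) * c - φ m) < s := by
        intro t
        have h := hmemE a₀ hAne (t • m) (t * (π m : ℝ))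
          (by rw [map_smul, smul_eq_mul])
        have heq : φ (a₀ - ((t • m : M) : L)) = φ a₀ - t * φ m := by
          rw [map_sub]
          congr 1
          rw [Submodule.coe_smul, map_smul, smul_eq_mul]
        rw [heq] at h
        calc φ a₀ + t * ((π m : ℝ) * c - φ m)
            = φ a₀ - t * φ m + t * (π m : ℝ) * c := by ring
          _ < s := by linarith [h]
      have := forall_linear_lt_zero key
      linarith [this]
    have hΦxr : s < φ x + r * c := by rw [← hΦ]; exact hΦx
    -- generic contradiction builder
    have hrs : ∀ ψ : L →L[ℝ] ℝ, (∀ m : M, ψ (m : L) = π m) → ∀ β : ℝ,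
        (∀ a ∈ A, β ≤ ψ a) → r < β - ψ x → False := by
      intro ψ hψ β hβ hlt
      have h1 : (β : EReal) ≤ suppFn A ψ := by
        apply le_sInf
        rintro _ ⟨a, ha, rfl⟩
        show (β : EReal) ≤ ((ψ a : ℝ) : EReal)
        exact_mod_cast hβ a ha
      have h2 : ((β - ψ x : ℝ) : EReal) ≤ suppFn A ψ - ((ψ x : ℝ) : EReal) := by
        rw [EReal.coe_sub]
        exact EReal.sub_le_sub h1 le_rfl
      have h3 : suppFn A ψ - ((ψ x : ℝ) : EReal) ≤ rhoStar A M π x := le_sSup ⟨ψ, hψ, rfl⟩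
      have h4 : (r : EReal) < rhoStar A M π x :=
        lt_of_lt_of_le (by exact_mod_cast hlt) (h2.trans h3)
      exact absurd hr1 h4.asymm
    rcases lt_or_eq_of_le hc0 with hcneg | hczero
    · -- case c < 0
      have hcne : c ≠ 0 := hcneg.ne
      have hinv : c⁻¹ < 0 := inv_neg''.mpr hcneg
      refine hrs (c⁻¹ • φ) ?_ (c⁻¹ * s) ?_ ?_
      · intro m
        rw [ContinuousLinearMap.smul_apply, smul_eq_mul, hφM m]
        field_simp
      · intro a ha
        rw [ContinuousLinearMap.smul_apply, smul_eq_mul]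
        exact mul_le_mul_of_nonpos_left (hφA a ha).le hinv.le
      · rw [ContinuousLinearMap.smul_apply, smul_eq_mul]
        have h5 := mul_lt_mul_of_neg_left hΦxr hinv
        have h6 : c⁻¹ * (φ x + r * c) = c⁻¹ * φ x + r := by field_simp
        linarith
    · -- case c = 0
      have hφM0 : ∀ m : M, φ (m : L) = 0 := by
        intro m; rw [hφM m, hczero, zero_mul]
      have hφxs : 0 < φ x - s := by
        rw [hczero] at hΦxr; simp at hΦxr; linarith
      obtain ⟨ψ₀, hψ₀M, hψ₀⟩ := hext
      have hub : suppFn A ψ₀ ≤ ((ψ₀ a₀ : ℝ) : EReal) := sInf_le ⟨a₀, hAne, rfl⟩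
      obtain ⟨β₀, hβ₀⟩ : ∃ b : ℝ, suppFn A ψ₀ = (b : EReal) := by
        have h1 : suppFn A ψ₀ ≠ ⊤ := ne_top_of_le_ne_top (EReal.coe_ne_top _) hub
        exact ⟨(suppFn A ψ₀).toReal, (EReal.coe_toReal h1 hψ₀).symm⟩
      have hβ₀le : ∀ a ∈ A, β₀ ≤ ψ₀ a := by
        intro a ha
        have h1 : suppFn A ψ₀ ≤ ((ψ₀ a : ℝ) : EReal) := sInf_le ⟨a, ha, rfl⟩
        rw [hβ₀] at h1
        exact_mod_cast h1
      set lam : ℝ := max 0 ((r - β₀ + ψ₀ x + 1) / (φ x - s)) with hlam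
      have hlam0 : 0 ≤ lam := le_max_left _ _
      have hlambig : r - β₀ + ψ₀ x + 1 ≤ lam * (φ x - s) := by
        have h1 : (r - β₀ + ψ₀ x + 1) / (φ x - s) ≤ lam := le_max_right _ _
        calc r - β₀ + ψ₀ x + 1
            = ((r - β₀ + ψ₀ x + 1) / (φ x - s)) * (φ x - s) :=
              (div_mul_cancel₀ _ hφxs.ne').symm
          _ ≤ lam * (φ x - s) := mul_le_mul_of_nonneg_right h1 hφxs.le
      refine hrs (ψ₀ - lam • φ) ?_ (β₀ - lam * s) ?_ ?_
      · intro m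
        rw [ContinuousLinearMap.sub_apply, ContinuousLinearMap.smul_apply, smul_eq_mul,
          hψ₀M m, hφM0 m]
        ring
      · intro a ha
        rw [ContinuousLinearMap.sub_apply, ContinuousLinearMap.smul_apply, smul_eq_mul]
        have h1 := hβ₀le a ha
        have h2 := mul_le_mul_of_nonneg_left (hφA a ha).le hlam0
        linarith
      · rw [ContinuousLinearMap.sub_apply, ContinuousLinearMap.smul_apply, smul_eq_mul]
        have h1 : lam * (φ x - s) = lam * φ x - lam * s := by ring
        linarith
end

section
/- Suppose the interior of A is nonempty, ext(π) ∩ barr(A) ≠ ∅ for a nonzero π ∈ K_M⁺, and ρ_π(x) < ∞ for all x ∈ L, where ρ_π(x) = inf{π(m) : m ∈ M, x + m ∈ A}. Then ρ_π is finite-valued and continuous on L. -/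
open Set Filter Topology

section aux
variable {L : Type*} [AddCommGroup L] [Module ℝ L] [TopologicalSpace L]
  [IsTopologicalAddGroup L] [ContinuousSMul ℝ L]

lemma myConvexCtsAt {f : L → ℝ} (hf : ConvexOn ℝ Set.univ f)
    {x₀ : L} {c : ℝ} (h : ∀ᶠ y in 𝓝 x₀, f y ≤ c) : ContinuousAt f x₀ := by
  rw [ContinuousAt, Metric.tendsto_nhds]
  intro ε hε
  have hfx : f x₀ ≤ c := h.self_of_nhds
  obtain ⟨t, ht0, ht1, htc⟩ : ∃ t : ℝ, 0 < t ∧ t ≤ 1 ∧ t * (c - f x₀) < ε := by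
    set c' : ℝ := c - f x₀ with hc'def
    have hc' : 0 ≤ c' := by simp only [hc'def]; linarith
    refine ⟨min 1 (ε / (2 * (c' + 1))), lt_min one_pos (by positivity), min_le_left _ _, ?_⟩
    have h1 : min 1 (ε / (2 * (c' + 1))) ≤ ε / (2 * (c' + 1)) := min_le_right _ _
    have h2 : min 1 (ε / (2 * (c' + 1))) * c' ≤ (ε / (2 * (c' + 1))) * c' :=
      mul_le_mul_of_nonneg_right h1 hc'
    have h3 : (ε / (2 * (c' + 1))) * c' < ε := by
      rw [div_mul_eq_mul_div, div_lt_iff₀ (by positivity)]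
      nlinarith
    exact lt_of_le_of_lt h2 h3
  set c' : ℝ := c - f x₀ with hc'def
  have hc' : 0 ≤ c' := by simp only [hc'def]; linarith
  have hg1 : Tendsto (fun y => x₀ + t⁻¹ • (y - x₀)) (𝓝 x₀) (𝓝 x₀) := by
    have hcont : Continuous (fun y : L => x₀ + t⁻¹ • (y - x₀)) := by fun_prop
    simpa using hcont.tendsto x₀
  have hg2 : Tendsto (fun y => x₀ - t⁻¹ • (y - x₀)) (𝓝 x₀) (𝓝 x₀) := by
    have hcont : Continuous (fun y : L => x₀ - t⁻¹ • (y - x₀)) := by fun_prop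
    simpa using hcont.tendsto x₀
  filter_upwards [hg1.eventually h, hg2.eventually h] with y hy1 hy2
  set w : L := t⁻¹ • (y - x₀) with hwdef
  have hyw : x₀ + t • w = y := by
    rw [hwdef, smul_inv_smul₀ ht0.ne']; abel
  have e1 : y = (1 - t) • x₀ + t • (x₀ + w) := by rw [← hyw]; module
  have hub : f y ≤ (1 - t) * f x₀ + t * f (x₀ + w) := by
    rw [e1]
    exact hf.2 (mem_univ _) (mem_univ _) (by linarith) ht0.le (by ring)
  have hup : f y - f x₀ ≤ t * c' := by nlinarith
  have h1t : (0:ℝ) < 1 + t := by linarith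
  have e2 : x₀ = (1 + t)⁻¹ • y + (t * (1 + t)⁻¹) • (x₀ - w) := by
    rw [← hyw]
    match_scalars <;> (field_simp; try ring)
  have hlb : f x₀ ≤ (1 + t)⁻¹ * f y + (t * (1 + t)⁻¹) * f (x₀ - w) := by
    calc f x₀ = f ((1 + t)⁻¹ • y + (t * (1 + t)⁻¹) • (x₀ - w)) := by rw [← e2]
    _ ≤ (1 + t)⁻¹ * f y + (t * (1 + t)⁻¹) * f (x₀ - w) :=
        hf.2 (mem_univ _) (mem_univ _) (by positivity) (by positivity) (by field_simp)
  have hdown : -(t * c') ≤ f y - f x₀ := by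
    have h5 : (1 + t) * f x₀ ≤ f y + t * f (x₀ - w) := by
      have h6 := mul_le_mul_of_nonneg_left hlb h1t.le
      calc (1 + t) * f x₀
          ≤ (1 + t) * ((1 + t)⁻¹ * f y + (t * (1 + t)⁻¹) * f (x₀ - w)) := h6
        _ = f y + t * f (x₀ - w) := by field_simp; try ring
    nlinarith
  rw [Real.dist_eq, abs_lt]
  constructor <;> nlinarith

lemma myConvexCts {f : L → ℝ} (hf : ConvexOn ℝ Set.univ f)
    {x₀ : L} {c : ℝ} (h : ∀ᶠ y in 𝓝 x₀, f y ≤ c) : Continuous f := by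
  rw [continuous_iff_continuousAt]
  intro x₁
  apply myConvexCtsAt hf (c := c / 2 + f ((2:ℝ) • x₁ - x₀) / 2)
  have hg : Tendsto (fun y => x₀ + (2:ℝ) • (y - x₁)) (𝓝 x₁) (𝓝 x₀) := by
    have hcont : Continuous (fun y : L => x₀ + (2:ℝ) • (y - x₁)) := by fun_prop
    simpa using hcont.tendsto x₁
  filter_upwards [hg.eventually h] with y hy
  have e : y = (1/2 : ℝ) • (x₀ + (2:ℝ) • (y - x₁)) + (1/2 : ℝ) • ((2:ℝ) • x₁ - x₀) := by
    module
  calc f y = f ((1/2 : ℝ) • (x₀ + (2:ℝ) • (y - x₁)) + (1/2 : ℝ) • ((2:ℝ) • x₁ - x₀)) := by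
        rw [← e]
    _ ≤ (1/2) * f (x₀ + (2:ℝ) • (y - x₁)) + (1/2) * f ((2:ℝ) • x₁ - x₀) :=
        hf.2 (mem_univ _) (mem_univ _) (by norm_num) (by norm_num) (by norm_num)
    _ ≤ c / 2 + f ((2:ℝ) • x₁ - x₀) / 2 := by linarith

end aux

theorem stmt_18 {L : Type*} [AddCommGroup L] [Module ℝ L] [TopologicalSpace L]
    [IsTopologicalAddGroup L] [ContinuousSMul ℝ L] [LocallyConvexSpace ℝ L] [T2Space L]
    (K : ConvexCone ℝ L) (hKcl : IsClosed (K : Set L))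
    (hKK : ∀ x : L, ∃ a ∈ K, ∃ b ∈ K, x = a - b)
    (A : Set L) (hAcl : IsClosed A) (hAconv : Convex ℝ A)
    (hAK : ∀ a ∈ A, ∀ k ∈ K, a + k ∈ A)
    (hAint : (interior A).Nonempty)
    (M : Submodule ℝ L) (hMcl : IsClosed (M : Set L))
    (π : M →L[ℝ] ℝ) (hπ0 : π ≠ 0) (hπK : ∀ k : M, (k : L) ∈ K → 0 ≤ π k)
    (hext : ∃ ψ : L →L[ℝ] ℝ, (∀ m : M, ψ (m : L) = π m) ∧ suppFn A ψ ≠ ⊥)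
    (hfin : ∀ x : L, rhoPi A M π x ≠ ⊤) :
    (∀ x : L, rhoPi A M π x ≠ ⊥ ∧ rhoPi A M π x ≠ ⊤) ∧
    Continuous (rhoPi A M π) := by
  obtain ⟨ψ, hψext, hψbot⟩ := hext
  obtain ⟨a₀, ha₀⟩ := hAint
  have hAne : A.Nonempty := ⟨a₀, interior_subset ha₀⟩
  -- the support value is a real number β
  have hbtop : suppFn A ψ ≠ ⊤ := by
    obtain ⟨a, ha⟩ := hAne
    have h1 : suppFn A ψ ≤ ((ψ a : ℝ) : EReal) := sInf_le ⟨a, ha, rfl⟩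
    exact ne_top_of_le_ne_top (EReal.coe_ne_top _) h1
  set β : ℝ := (suppFn A ψ).toReal with hβdef
  have hβcoe : ((β : ℝ) : EReal) = suppFn A ψ := EReal.coe_toReal hbtop hψbot
  have hβ : ∀ x ∈ A, β ≤ ψ x := by
    intro x hx
    have h1 : suppFn A ψ ≤ ((ψ x : ℝ) : EReal) := sInf_le ⟨x, hx, rfl⟩
    rw [← hβcoe] at h1
    exact_mod_cast h1
  -- lower bound for rhoPi
  have hlb : ∀ x : L, ((β - ψ x : ℝ) : EReal) ≤ rhoPi A M π x := by
    intro x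
    apply le_sInf
    rintro _ ⟨n, hn, rfl⟩
    have h1 : β ≤ ψ (x + (n : L)) := hβ _ hn
    have h2 : ψ (x + (n : L)) = ψ x + π n := by rw [map_add, hψext]
    have h3 : (β - ψ x : ℝ) ≤ (π n : ℝ) := by linarith
    exact EReal.coe_le_coe_iff.mpr h3
  have hne_bot : ∀ x : L, rhoPi A M π x ≠ ⊥ := by
    intro x
    intro h
    have h1 := hlb x
    rw [h, le_bot_iff] at h1
    exact EReal.coe_ne_bot _ h1
  refine ⟨fun x => ⟨hne_bot x, hfin x⟩, ?_⟩
  -- the real-valued function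
  set f : L → ℝ := fun x => (rhoPi A M π x).toReal with hfdef
  have hcoe : ∀ x : L, rhoPi A M π x = ((f x : ℝ) : EReal) :=
    fun x => (EReal.coe_toReal (hfin x) (hne_bot x)).symm
  -- upper bound by feasible points
  have hub : ∀ (x : L) (n : M), x + (n : L) ∈ A → f x ≤ π n := by
    intro x n hn
    have h1 : rhoPi A M π x ≤ ((π n : ℝ) : EReal) := sInf_le ⟨n, hn, rfl⟩
    rw [hcoe x] at h1
    exact_mod_cast h1
  -- approximation
  have happrox : ∀ (x : L) (ε : ℝ), 0 < ε → ∃ n : M, x + (n : L) ∈ A ∧ (π n : ℝ) < f x + ε := by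
    intro x ε hε
    have h1 : rhoPi A M π x < ((f x + ε : ℝ) : EReal) := by
      rw [hcoe x]
      exact_mod_cast lt_add_of_pos_right _ hε
    rw [rhoPi, sInf_lt_iff] at h1
    obtain ⟨_, ⟨n, hn, rfl⟩, hlt⟩ := h1
    exact ⟨n, hn, EReal.coe_lt_coe_iff.mp hlt⟩
  -- convexity of f
  have hconv : ConvexOn ℝ Set.univ f := by
    refine ⟨convex_univ, ?_⟩
    rintro x - y - a b ha hb hab
    rcases ha.eq_or_lt with h0 | ha'
    · obtain rfl : a = 0 := h0.symm
      obtain rfl : b = 1 := by linarith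
      simp
    rcases hb.eq_or_lt with h0 | hb'
    · obtain rfl : b = 0 := h0.symm
      obtain rfl : a = 1 := by linarith
      simp
    by_contra hlt
    push_neg at hlt
    rw [smul_eq_mul, smul_eq_mul] at hlt
    set ε : ℝ := f (a • x + b • y) - (a * f x + b * f y) with hεdef
    have hε : 0 < ε := by simp only [hεdef]; linarith
    obtain ⟨m, hm, hm'⟩ := happrox x ε hε
    obtain ⟨n, hn, hn'⟩ := happrox y ε hε
    have hfeas : (a • x + b • y) + ((a • m + b • n : M) : L) ∈ A := by
      have h1 : (a • x + b • y) + ((a • m + b • n : M) : L)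
          = a • (x + (m : L)) + b • (y + (n : L)) := by
        push_cast
        module
      rw [h1]
      exact hAconv hm hn ha hb hab
    have h2 : f (a • x + b • y) ≤ (π (a • m + b • n) : ℝ) := hub _ _ hfeas
    have h3 : (π (a • m + b • n) : ℝ) = a * π m + b * π n := by
      rw [map_add, map_smul, map_smul]; simp [smul_eq_mul]
    nlinarith [mul_lt_mul_of_pos_left hm' ha', mul_lt_mul_of_pos_left hn' hb']
  -- bounded above near a₀
  have hev : ∀ᶠ y in 𝓝 a₀, f y ≤ 0 := by
    filter_upwards [isOpen_interior.mem_nhds ha₀] with y hy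
    have hy0 : y + ((0 : M) : L) ∈ A := by simpa using interior_subset hy
    have := hub y 0 hy0
    simpa using this
  have hcontf : Continuous f := myConvexCts hconv hev
  have heq : rhoPi A M π = fun x => ((f x : ℝ) : EReal) := funext hcoe
  rw [heq]
  exact continuous_coe_real_ereal.comp hcontf
end
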